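/- Work over a field K with units t and p₁, p₂ such that t² ∉ {p₁², p₂², (p₁p₂)²}. For a unit p with t² ≠ p², define D(p) = t p^{−1} − t^{−1} p and the 4×4 matrix Ř(p) over K, rows and columns indexed by pairs in {1,2}², with nonzero entries (row (i,k), column (j,l)): Ř(p)_{(1,1),(1,1)} = 1; Ř(p)_{(2,2),(2,2)} = (tp − t^{−1}p^{−1})/D(p); Ř(p)_{(1,2),(1,2)} = (t − t^{−1})p^{−1}/D(p); Ř(p)_{(2,1),(2,1)} = (t − t^{−1})p/D(p); Ř(p)_{(1,2),(2,1)} = Ř(p)_{(2,1),(1,2)} = −(p − p^{−1})/D(p). Then, with I the 2×2 identity and ⊗ the Kronecker product: (Ř(p₁) ⊗ I) · (I ⊗ Ř(p₁p₂)) · (Ř(p₂) ⊗ I) = (I ⊗ Ř(p₂)) · (Ř(p₁p₂) ⊗ I) · (I ⊗ Ř(p₁)). -/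
import Mathlib


open Matrix
open scoped Kronecker

/-- `M ↦ M ⊗ I`, acting on triple tensor indices (reassociated). -/
def amp12 {A : Type*} [CommRing A] {n : ℕ}
    (M : Matrix (Fin n × Fin n) (Fin n × Fin n) A) :
    Matrix (Fin n × Fin n × Fin n) (Fin n × Fin n × Fin n) A :=
  Matrix.reindex (Equiv.prodAssoc (Fin n) (Fin n) (Fin n))
    (Equiv.prodAssoc (Fin n) (Fin n) (Fin n)) (M ⊗ₖ (1 : Matrix (Fin n) (Fin n) A))

/-- `M ↦ I ⊗ M`, acting on triple tensor indices. -/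
def amp23 {A : Type*} [CommRing A] {n : ℕ}
    (M : Matrix (Fin n × Fin n) (Fin n × Fin n) A) :
    Matrix (Fin n × Fin n × Fin n) (Fin n × Fin n × Fin n) A :=
  (1 : Matrix (Fin n) (Fin n) A) ⊗ₖ M

/-- The grading-stripped trigonometric R matrix `Ř¹(u)` of `U_q[gl(1|1)]`,
with `t = q^α` and `p = q^u`; indices `1,2` are encoded as `0,1 : Fin 2`. -/
def R1 {K : Type*} [Field K] (t p : K) : Matrix (Fin 2 × Fin 2) (Fin 2 × Fin 2) K :=
  let D : K := t * p⁻¹ - t⁻¹ * p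
  Matrix.of fun x y =>
    if x = (0, 0) ∧ y = (0, 0) then 1
    else if x = (1, 1) ∧ y = (1, 1) then (t * p - t⁻¹ * p⁻¹) / D
    else if x = (0, 1) ∧ y = (0, 1) then (t - t⁻¹) * p⁻¹ / D
    else if x = (1, 0) ∧ y = (1, 0) then (t - t⁻¹) * p / D
    else if x = (0, 1) ∧ y = (1, 0) then -(p - p⁻¹) / D
    else if x = (1, 0) ∧ y = (0, 1) then -(p - p⁻¹) / D
    else 0

/-- Polynomial rescaling of `R1`: `Pm t p = (t² - p²) • R1 t p`. -/
def Pm {K : Type*} [CommRing K] (t p : K) : Matrix (Fin 2 × Fin 2) (Fin 2 × Fin 2) K :=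
  Matrix.of fun x y =>
    if x = (0, 0) ∧ y = (0, 0) then t ^ 2 - p ^ 2
    else if x = (1, 1) ∧ y = (1, 1) then t ^ 2 * p ^ 2 - 1
    else if x = (0, 1) ∧ y = (0, 1) then t ^ 2 - 1
    else if x = (1, 0) ∧ y = (1, 0) then (t ^ 2 - 1) * p ^ 2
    else if x = (0, 1) ∧ y = (1, 0) then -(t * (p ^ 2 - 1))
    else if x = (1, 0) ∧ y = (0, 1) then -(t * (p ^ 2 - 1))
    else 0

set_option maxHeartbeats 2000000 in
lemma R1_eq_smul_Pm {K : Type*} [Field K] {t p : K} (ht : t ≠ 0) (hp : p ≠ 0)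
    (h : t ^ 2 ≠ p ^ 2) : R1 t p = (t ^ 2 - p ^ 2)⁻¹ • Pm t p := by
  have h' : t ^ 2 - p ^ 2 ≠ 0 := sub_ne_zero.mpr h
  have hd : t * p⁻¹ - t⁻¹ * p ≠ 0 := by
    intro h0
    apply h
    have := sub_eq_zero.mp h0
    field_simp at this
    linear_combination this
  have e1 : -(t * p ^ 3) + t ^ 3 * p ≠ 0 := by
    have he : -(t * p ^ 3) + t ^ 3 * p = t * p * (t ^ 2 - p ^ 2) := by ring
    rw [he]; exact mul_ne_zero (mul_ne_zero ht hp) h'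
  have e2 : p * t ^ 2 - p ^ 3 ≠ 0 := by
    have he : p * t ^ 2 - p ^ 3 = p * (t ^ 2 - p ^ 2) := by ring
    rw [he]; exact mul_ne_zero hp h'
  have e3 : -(t * p ^ 2) + t ^ 3 ≠ 0 := by
    have he : -(t * p ^ 2) + t ^ 3 = t * (t ^ 2 - p ^ 2) := by ring
    rw [he]; exact mul_ne_zero ht h'
  have e4 : t ^ 2 * p - p ^ 3 ≠ 0 := by
    have he : t ^ 2 * p - p ^ 3 = p * (t ^ 2 - p ^ 2) := by ring
    rw [he]; exact mul_ne_zero hp h'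
  have e5 : t ^ 3 - t * p ^ 2 ≠ 0 := by
    have he : t ^ 3 - t * p ^ 2 = t * (t ^ 2 - p ^ 2) := by ring
    rw [he]; exact mul_ne_zero ht h'
  have e6 : t ^ 3 * p - t * p ^ 3 ≠ 0 := by
    have he : t ^ 3 * p - t * p ^ 3 = t * p * (t ^ 2 - p ^ 2) := by ring
    rw [he]; exact mul_ne_zero (mul_ne_zero ht hp) h'
  ext ⟨i, k⟩ ⟨j, l⟩
  fin_cases i <;> fin_cases k <;> fin_cases j <;> fin_cases l <;>
    rw [Matrix.smul_apply, smul_eq_mul, eq_inv_mul_iff_mul_eq₀ h'] <;>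
    simp [R1, Pm, Prod.ext_iff] <;>
    field_simp <;> (try ring1) <;> (try ring_nf) <;> (try field_simp [e1, e2, e3, e4, e5, e6]) <;> ring

lemma amp12_smul {A : Type*} [CommRing A] {n : ℕ} (c : A)
    (M : Matrix (Fin n × Fin n) (Fin n × Fin n) A) :
    amp12 (c • M) = c • amp12 M := by
  simp [amp12, Matrix.smul_kronecker, Matrix.submatrix_smul]

lemma amp23_smul {A : Type*} [CommRing A] {n : ℕ} (c : A)
    (M : Matrix (Fin n × Fin n) (Fin n × Fin n) A) :
    amp23 (c • M) = c • amp23 M := by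
  simp [amp23, Matrix.kronecker_smul]

set_option maxHeartbeats 4000000 in
lemma Pm_YBE {K : Type*} [CommRing K] (t p₁ p₂ : K) :
    amp12 (Pm t p₁) * amp23 (Pm t (p₁ * p₂)) * amp12 (Pm t p₂) =
      amp23 (Pm t p₂) * amp12 (Pm t (p₁ * p₂)) * amp23 (Pm t p₁) := by
  ext ⟨i, j, k⟩ ⟨a, b, c⟩
  fin_cases i <;> fin_cases j <;> fin_cases k <;> fin_cases a <;> fin_cases b <;> fin_cases c <;>
    · simp only [amp12, amp23, Matrix.mul_apply, Fintype.sum_prod_type, Fin.sum_univ_two,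
        Matrix.reindex_apply, Matrix.submatrix_apply, Equiv.prodAssoc, Equiv.coe_fn_symm_mk,
        Matrix.kroneckerMap_apply, Matrix.one_apply, Pm, Matrix.of_apply, Prod.ext_iff]
      norm_num
      try ring

/-- The trigonometric Yang–Baxter equation for `Ř¹`, in multiplicative spectral
parameters `p₁ = q^u`, `p₂ = q^v`, `p₁p₂ = q^(u+v)`. -/
theorem R1_trigonometric_YBE {K : Type*} [Field K] (t p₁ p₂ : K)
    (ht : t ≠ 0) (hp₁ : p₁ ≠ 0) (hp₂ : p₂ ≠ 0)
    (h1 : t ^ 2 ≠ p₁ ^ 2) (h2 : t ^ 2 ≠ p₂ ^ 2) (h3 : t ^ 2 ≠ (p₁ * p₂) ^ 2) :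
    amp12 (R1 t p₁) * amp23 (R1 t (p₁ * p₂)) * amp12 (R1 t p₂) =
      amp23 (R1 t p₂) * amp12 (R1 t (p₁ * p₂)) * amp23 (R1 t p₁) := by
  rw [R1_eq_smul_Pm ht hp₁ h1, R1_eq_smul_Pm ht hp₂ h2,
    R1_eq_smul_Pm ht (mul_ne_zero hp₁ hp₂) h3]
  simp only [amp12_smul, amp23_smul, smul_mul_assoc, mul_smul_comm, smul_smul]
  rw [Pm_YBE]
  congr 1
  ring
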